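/- In the ring ℤ[a,a⁻¹] of Laurent polynomials over the integers, the ideal generated by the two elements a⁹ + 1 and a⁻⁶ + 1 + a⁶ is equal to the (principal) ideal generated by a⁶ − a³ + 1. -/

import Mathlib

open LaurentPolynomial

lemma aux_TT (m n : ℤ) : (T m : LaurentPolynomial ℤ) * T n = T (m + n) := (T_add m n).symm

/-- In the ring `ℤ[a,a⁻¹]` of Laurent polynomials over the integers, the ideal generated by
`a⁹ + 1` and `a⁻⁶ + 1 + a⁶` equals the principal ideal generated by `a⁶ - a³ + 1`. -/
theorem stmt_0 :
    Ideal.span ({T 9 + 1, T (-6) + 1 + T 6} : Set (LaurentPolynomial ℤ)) =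
      Ideal.span ({T 6 - T 3 + 1} : Set (LaurentPolynomial ℤ)) := by
  apply le_antisymm
  · rw [Ideal.span_le]
    rintro x (rfl | rfl)
    · rw [SetLike.mem_coe, Ideal.mem_span_singleton]
      exact ⟨T 3 + 1, by ring_nf; simp only [aux_TT]; norm_num; ring⟩
    · rw [SetLike.mem_coe, Ideal.mem_span_singleton]
      exact ⟨T (-6) + T (-3) + 1, by ring_nf; simp only [aux_TT]; norm_num; ring⟩
  · rw [Ideal.span_le]
    rintro x rfl
    rw [SetLike.mem_coe, Ideal.mem_span_pair]
    exact ⟨-T 3, T 6, by ring_nf; simp only [aux_TT]; norm_num; ring⟩
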